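/- Let {Γ, B} be a balanced 3-valent graph with M({Γ, B}) > 0, and let C be a cycle of Γ all of whose edges are primitive, with at least one vertex of finite multiplicity. Then among the lattices L(v) of the vertices v of C there is a maximal one L(C) containing all the others. -/

import Mathlib

noncomputable def pdet (u v : ℤ_[2] × ℤ_[2]) : ℤ_[2] := u.1 * v.2 - u.2 * v.1

def PrimVec (u : ℤ_[2] × ℤ_[2]) : Prop := IsUnit u.1 ∨ IsUnit u.2

/-- Cramer's rule in rank 2. -/
lemma pdet_cramer (a b w : ℤ_[2] × ℤ_[2]) :
    pdet a b • w = pdet w b • a + pdet a w • b := by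
  unfold pdet
  apply Prod.ext <;> simp [smul_eq_mul] <;> ring

/-- Decomposition of any vector along a primitive vector. -/
lemma prim_decomp (u : ℤ_[2] × ℤ_[2]) (hu : PrimVec u) (w : ℤ_[2] × ℤ_[2]) :
    ∃ β e1 e2 : ℤ_[2], w.1 = β * u.1 + pdet u w * e1 ∧ w.2 = β * u.2 + pdet u w * e2 := by
  rcases hu with h | h
  · obtain ⟨v, hv⟩ := h.exists_left_inv
    refine ⟨w.1 * v, 0, v, ?_, ?_⟩ <;> unfold pdet
    · linear_combination (-w.1) * hv
    · linear_combination (-w.2) * hv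
  · obtain ⟨v, hv⟩ := h.exists_left_inv
    refine ⟨w.2 * v, -v, 0, ?_, ?_⟩ <;> unfold pdet
    · linear_combination (-w.1) * hv
    · linear_combination (-w.2) * hv

lemma not_isUnit_dvd (x : ℤ_[2]) (h : ¬ IsUnit x) : (2 : ℤ_[2]) ∣ x := by
  have : ((2 : ℕ) : ℤ_[2]) ∣ x := by
    rw [← PadicInt.norm_lt_one_iff_dvd]
    exact lt_of_le_of_ne (PadicInt.norm_le_one x) fun h' => h (PadicInt.isUnit_iff.2 h')
  simpa using this

open Finset in
theorem stmt13 {V E : Type} [Fintype V] [Fintype E] [DecidableEq V] [DecidableEq E]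
    (rev : E → E) (head : E → V) (B : E → ℤ_[2] × ℤ_[2])
    (hrev : ∀ e, rev (rev e) = e) (hrevne : ∀ e, rev e ≠ e)
    (hcubic : ∀ v : V, (Finset.univ.filter fun e => head e = v).card = 3)
    (hBrev : ∀ e, B (rev e) = - B e)
    (hBsum : ∀ v : V, ∑ e ∈ Finset.univ.filter (fun e => head e = v), B e = 0)
    (m : V → ℕ∞)
    (hm : ∀ (v : V) (e1 e2 : E), e1 ≠ e2 → head e1 = v → head e2 = v →
      m v = emultiplicity (2 : ℤ_[2]) (pdet (B e1) (B e2)))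
    (L : V → Submodule ℤ_[2] (ℤ_[2] × ℤ_[2]))
    (hL : ∀ (v : V) (e1 e2 : E), e1 ≠ e2 → head e1 = v → head e2 = v →
      L v = Submodule.span ℤ_[2] {B e1, B e2})
    (hpos : ∀ v : V, m v ≠ 0)
    (n : ℕ) [NeZero n] (c : ZMod n → E)
    (hcyc : ∀ i : ZMod n, head (rev (c (i + 1))) = head (c i))
    (hcinj : ∀ i j : ZMod n, c i = c j → i = j)
    (hcnr : ∀ i j : ZMod n, c i ≠ rev (c j))
    (hcprim : ∀ i : ZMod n, PrimVec (B (c i)))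
    (hfin : ∃ i : ZMod n, m (head (c i)) ≠ ⊤) :
    ∃ i : ZMod n, ∀ j : ZMod n, L (head (c j)) ≤ L (head (c i)) := by
  classical
  -- the determinant along the cycle
  set D : ZMod n → ℤ_[2] := fun j => pdet (B (c j)) (B (rev (c (j + 1)))) with hD
  have hLc : ∀ i : ZMod n, L (head (c i)) =
      Submodule.span ℤ_[2] {B (c i), B (rev (c (i + 1)))} :=
    fun i => hL _ _ _ (hcnr i (i + 1)) rfl (hcyc i)
  have hmc : ∀ i : ZMod n, m (head (c i)) = emultiplicity (2 : ℤ_[2]) (D i) :=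
    fun i => hm _ _ _ (hcnr i (i + 1)) rfl (hcyc i)
  -- choose a vertex with minimal multiplicity
  obtain ⟨i0, -, hmin⟩ := Finset.exists_min_image (Finset.univ : Finset (ZMod n))
    (fun j => emultiplicity (2 : ℤ_[2]) (D j)) ⟨0, Finset.mem_univ 0⟩
  obtain ⟨jf, hjf⟩ := hfin
  have hfin0 : emultiplicity (2 : ℤ_[2]) (D i0) ≠ ⊤ :=
    ne_top_of_le_ne_top (by rw [← hmc jf]; exact hjf)
      (hmin jf (Finset.mem_univ jf))
  obtain ⟨k, hk⟩ : ∃ k : ℕ, emultiplicity (2 : ℤ_[2]) (D i0) = k := by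
    lift (emultiplicity (2 : ℤ_[2]) (D i0)) to ℕ using hfin0 with k hk
    exact ⟨k, rfl⟩
  have hdvd : ∀ j : ZMod n, (2 : ℤ_[2]) ^ k ∣ D j := by
    intro j
    exact pow_dvd_of_le_emultiplicity (hk ▸ hmin j (Finset.mem_univ j))
  have hndvd : ¬ (2 : ℤ_[2]) ^ (k + 1) ∣ D i0 := by
    intro h
    have := le_emultiplicity_of_pow_dvd h
    rw [hk] at this
    exact absurd (by exact_mod_cast this) (by omega)
  -- write D i0 = 2^k * unit
  obtain ⟨ε, hε⟩ := hdvd i0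
  have hεu : IsUnit ε := by
    by_contra h
    obtain ⟨c', hc'⟩ := not_isUnit_dvd ε h
    exact hndvd ⟨c', by rw [hε, hc']; ring⟩
  -- the target lattice
  set a := B (c i0) with ha
  set b := B (rev (c (i0 + 1))) with hb
  set S := Submodule.span ℤ_[2] ({a, b} : Set (ℤ_[2] × ℤ_[2])) with hS
  have haS : a ∈ S := Submodule.subset_span (by simp)
  have hbS : b ∈ S := Submodule.subset_span (by simp)
  -- 2^k Λ ⊆ S
  have hfull : ∀ w : ℤ_[2] × ℤ_[2], ((2 : ℤ_[2]) ^ k) • w ∈ S := by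
    intro w
    obtain ⟨η, hη⟩ := hεu
    have hmem : D i0 • ((η⁻¹ : ℤ_[2]ˣ) • w) ∈ S := by
      rw [pdet_cramer]
      exact S.add_mem (S.smul_mem _ haS) (S.smul_mem _ hbS)
    have : D i0 • ((η⁻¹ : ℤ_[2]ˣ) • w) = ((2 : ℤ_[2]) ^ k) • w := by
      rw [hε, ← hη, Units.smul_def, smul_smul]
      congr 1
      rw [mul_assoc]
      simp
    rwa [this] at hmem
  -- congruence along the cycle
  have hstep : ∀ j : ZMod n, ∃ β : ℤ_[2],
      (2 : ℤ_[2]) ^ k ∣ ((B (c (j + 1))).1 - β * (B (c j)).1) ∧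
      (2 : ℤ_[2]) ^ k ∣ ((B (c (j + 1))).2 - β * (B (c j)).2) := by
    intro j
    obtain ⟨β, e1, e2, h1, h2⟩ := prim_decomp (B (c j)) (hcprim j) (B (c (j + 1)))
    have hdj : (2 : ℤ_[2]) ^ k ∣ pdet (B (c j)) (B (c (j + 1))) := by
      have : pdet (B (c j)) (B (c (j + 1))) = -(D j) := by
        rw [hD]; simp only [hBrev]
        unfold pdet
        simp only [Prod.fst_neg, Prod.snd_neg]
        ring
      rw [this]
      exact (hdvd j).neg_right
    refine ⟨β, ?_, ?_⟩
    · have : (B (c (j + 1))).1 - β * (B (c j)).1 = pdet (B (c j)) (B (c (j + 1))) * e1 := by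
        rw [h1]; ring
      rw [this]; exact hdj.mul_right e1
    · have : (B (c (j + 1))).2 - β * (B (c j)).2 = pdet (B (c j)) (B (c (j + 1))) * e2 := by
        rw [h2]; ring
      rw [this]; exact hdj.mul_right e2
  have hcong : ∀ t : ℕ, ∃ α : ℤ_[2],
      (2 : ℤ_[2]) ^ k ∣ ((B (c (i0 + t))).1 - α * a.1) ∧
      (2 : ℤ_[2]) ^ k ∣ ((B (c (i0 + t))).2 - α * a.2) := by
    intro t
    induction t with
    | zero => exact ⟨1, by simp [ha]⟩
    | succ t ih =>
      obtain ⟨α, h1, h2⟩ := ih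
      obtain ⟨β, g1, g2⟩ := hstep (i0 + t)
      refine ⟨β * α, ?_, ?_⟩
      · have : (B (c (i0 + (t + 1 : ℕ)))).1 - β * α * a.1 =
            ((B (c (i0 + t + 1))).1 - β * (B (c (i0 + t))).1)
              + β * ((B (c (i0 + t))).1 - α * a.1) := by
          push_cast
          ring_nf
        rw [this]
        exact dvd_add g1 (h1.mul_left β)
      · have : (B (c (i0 + (t + 1 : ℕ)))).2 - β * α * a.2 =
            ((B (c (i0 + t + 1))).2 - β * (B (c (i0 + t))).2)
              + β * ((B (c (i0 + t))).2 - α * a.2) := by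
          push_cast
          ring_nf
        rw [this]
        exact dvd_add g2 (h2.mul_left β)
  -- every B (c j) is in S
  have hmemu : ∀ j : ZMod n, B (c j) ∈ S := by
    intro j
    obtain ⟨α, h1, h2⟩ := hcong (j - i0).val
    rw [ZMod.natCast_rightInverse (j - i0), add_sub_cancel] at h1 h2
    obtain ⟨c1, hc1⟩ := h1
    obtain ⟨c2, hc2⟩ := h2
    have : B (c j) = α • a + ((2 : ℤ_[2]) ^ k) • ((c1, c2) : ℤ_[2] × ℤ_[2]) := by
      apply Prod.ext
      · simp only [Prod.fst_add, Prod.smul_fst, smul_eq_mul]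
        linear_combination hc1
      · simp only [Prod.snd_add, Prod.smul_snd, smul_eq_mul]
        linear_combination hc2
    rw [this]
    exact S.add_mem (S.smul_mem _ haS) (hfull _)
  refine ⟨i0, fun j => ?_⟩
  rw [hLc j, hLc i0, ← ha, ← hb, ← hS]
  rw [Submodule.span_le]
  rintro x hx
  rcases hx with rfl | rfl
  · exact hmemu j
  · rw [hBrev]
    exact S.neg_mem (hmemu (j + 1))
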